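/- arXiv:1805.00533 — 2 statements merged into one kernel-verified Lean document; each statement's English description precedes it below -/
import Mathlib

section
/- For ρ ∈ (0,1), ∫₀^∞ t² e^{-t²/2} Φ(ρt/√(1-ρ²)) dt = √(π/2) − (1/√(2π))·(arctan(√(1-ρ²)/ρ) − ρ√(1-ρ²)). -/
open MeasureTheory Real Filter Set

noncomputable def Phi (x : ℝ) : ℝ :=
  ∫ s in Set.Iic x, (1 / Real.sqrt (2 * Real.pi)) * Real.exp (-s ^ 2 / 2)

noncomputable def stdPdf (x : ℝ) : ℝ := (1 / Real.sqrt (2 * Real.pi)) * Real.exp (-x ^ 2 / 2)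

lemma stdPdf_cont : Continuous stdPdf := by
  unfold stdPdf; continuity

lemma exp_eq (x : ℝ) : Real.exp (-x ^ 2 / 2) = Real.exp (-(1/2 : ℝ) * x ^ 2) := by
  ring_nf

lemma stdPdf_integrable : Integrable stdPdf := by
  unfold stdPdf
  simp_rw [exp_eq]
  exact (integrable_exp_neg_mul_sq (by norm_num)).const_mul _

lemma stdPdf_nonneg (x : ℝ) : 0 ≤ stdPdf x := by
  unfold stdPdf
  positivity

lemma stdPdf_total : ∫ x, stdPdf x = 1 := by
  unfold stdPdf
  simp_rw [exp_eq]
  rw [integral_const_mul, integral_gaussian]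
  rw [show (π / (1/2) : ℝ) = 2 * π by ring]
  rw [one_div_mul_cancel]
  positivity

lemma Phi_eq (x : ℝ) : Phi x = ∫ s in Set.Iic x, stdPdf s := rfl

lemma Phi_hasDerivAt (x : ℝ) : HasDerivAt Phi (stdPdf x) x := by
  have h : Phi = fun x => Phi 0 + ∫ s in (0:ℝ)..x, stdPdf s := by
    funext y
    rw [Phi_eq, Phi_eq, ← intervalIntegral.integral_Iic_sub_Iic
      (stdPdf_integrable.integrableOn) (stdPdf_integrable.integrableOn)]
    ring
  rw [h]
  exact (intervalIntegral.integral_hasDerivAt_right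
    (stdPdf_integrable.intervalIntegrable)
    stdPdf_cont.aestronglyMeasurable.stronglyMeasurableAtFilter
    stdPdf_cont.continuousAt).const_add _

lemma Phi_cont : Continuous Phi :=
  continuous_iff_continuousAt.2 fun x => (Phi_hasDerivAt x).continuousAt

lemma Phi_nonneg (x : ℝ) : 0 ≤ Phi x :=
  integral_nonneg fun s => stdPdf_nonneg s

lemma Phi_le_one (x : ℝ) : Phi x ≤ 1 := by
  rw [Phi_eq, ← stdPdf_total]
  exact setIntegral_le_integral stdPdf_integrable
    (Filter.Eventually.of_forall fun s => stdPdf_nonneg s)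

lemma Phi_zero : Phi 0 = 1/2 := by
  have h1 : ∫ s in Set.Iic (0:ℝ), stdPdf s = ∫ s in Set.Ioi (0:ℝ), stdPdf s := by
    have h := integral_comp_neg_Iic (0:ℝ) stdPdf
    rw [neg_zero] at h
    rw [← h]
    congr 1
    funext s
    unfold stdPdf
    ring_nf
  have h2 : (∫ s in Set.Iic (0:ℝ), stdPdf s) + ∫ s in Set.Ioi (0:ℝ), stdPdf s = 1 := by
    rw [← stdPdf_total]
    rw [← setIntegral_union (by simp [Set.disjoint_left]) measurableSet_Ioi
      stdPdf_integrable.integrableOn stdPdf_integrable.integrableOn]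
    rw [Set.Iic_union_Ioi]
    simp [Measure.restrict_univ]
  rw [Phi_eq]
  linarith [h1 ▸ h2]


lemma stdPdf_def (x : ℝ) : stdPdf x = (1 / Real.sqrt (2 * Real.pi)) * Real.exp (-x ^ 2 / 2) := rfl


lemma int_pow_gauss {a : ℝ} (ha : 0 < a) (n : ℕ) :
    IntegrableOn (fun t : ℝ => t ^ n * Real.exp (-a * t ^ 2 / 2)) (Ioi 0) := by
  have h := integrableOn_rpow_mul_exp_neg_mul_sq (b := a/2) (by linarith) (s := n)
    (by exact lt_of_lt_of_le (by norm_num) (Nat.cast_nonneg n))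
  apply h.congr_fun _ measurableSet_Ioi
  intro x hx
  simp only [Real.rpow_natCast]
  ring_nf

lemma tendsto_poly_gauss (a c d : ℝ) (ha : 0 < a) :
    Tendsto (fun t : ℝ => (c * t ^ 2 + d) * Real.exp (-a * t ^ 2 / 2)) atTop (nhds 0) := by
  have hb : ∀ s : ℝ, Tendsto (fun u : ℝ => u ^ s * Real.exp (-(a/2) * u)) atTop (nhds 0) :=
    fun s => tendsto_rpow_mul_exp_neg_mul_atTop_nhds_zero s (a/2) (by linarith)
  have h1 : Tendsto (fun u : ℝ => (c * u + d) * Real.exp (-(a/2) * u)) atTop (nhds 0) := by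
    have h2 := ((hb 1).const_mul c).add ((hb 0).const_mul d)
    simp only [mul_zero, add_zero] at h2
    refine h2.congr' ?_
    filter_upwards [eventually_gt_atTop (0:ℝ)] with u hu
    rw [Real.rpow_one, Real.rpow_zero]
    ring
  have h3 : Tendsto (fun t : ℝ => t ^ 2) atTop (atTop : Filter ℝ) :=
    tendsto_pow_atTop (by norm_num)
  refine (h1.comp h3).congr fun t => ?_
  simp only [Function.comp]
  ring_nf

lemma int_cube_gauss {a : ℝ} (ha : 0 < a) :
    ∫ t in Ioi (0:ℝ), t ^ 3 * Real.exp (-a * t ^ 2 / 2) = 2 / a ^ 2 := by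
  have hderiv : ∀ t ∈ Ici (0:ℝ), HasDerivAt
      (fun t : ℝ => -((t^2/a + 2/a^2) * Real.exp (-a * t ^ 2 / 2)))
      (t ^ 3 * Real.exp (-a * t ^ 2 / 2)) t := by
    intro t _
    have he : HasDerivAt (fun t : ℝ => Real.exp (-a * t ^ 2 / 2))
        (Real.exp (-a * t ^ 2 / 2) * (-a * t)) t := by
      have hinner : HasDerivAt (fun t : ℝ => -a * t ^ 2 / 2) (-a * t) t := by
        have := ((hasDerivAt_pow 2 t).const_mul (-a)).div_const 2
        refine this.congr_deriv ?_
        push_cast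
        ring
      exact hinner.exp
    have hp : HasDerivAt (fun t : ℝ => t^2/a + 2/a^2) (2 * t / a) t := by
      have := ((hasDerivAt_pow 2 t).div_const a).add_const (2/a^2)
      refine this.congr_deriv ?_
      push_cast
      ring
    have := (hp.mul he).neg
    refine this.congr_deriv ?_
    field_simp
    ring
  have hint := int_pow_gauss ha 3
  have htend : Tendsto (fun t : ℝ => -((t^2/a + 2/a^2) * Real.exp (-a * t ^ 2 / 2)))
      atTop (nhds 0) := by
    have := (tendsto_poly_gauss a (1/a) (2/a^2) ha).neg
    rw [neg_zero] at this
    refine this.congr fun t => ?_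
    ring_nf
  rw [integral_Ioi_of_hasDerivAt_of_tendsto' hderiv hint htend]
  field_simp
  simp

lemma int_sq_gauss : ∫ t in Ioi (0:ℝ), t ^ 2 * Real.exp (-t ^ 2 / 2)
    = Real.sqrt (2 * Real.pi) / 2 := by
  have hsub : IntegrableOn (fun t : ℝ => (t ^ 2 - 1) * Real.exp (-t ^ 2 / 2)) (Ioi 0) := by
    have h2 := int_pow_gauss one_pos 2
    have h0 := int_pow_gauss one_pos 0
    refine IntegrableOn.congr_fun (h2.sub h0) (fun x _ => ?_) measurableSet_Ioi
    simp only [Pi.sub_apply, pow_zero, neg_one_mul, one_mul]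
    ring_nf
  have h0' : IntegrableOn (fun t : ℝ => Real.exp (-t ^ 2 / 2)) (Ioi 0) := by
    have h0 := int_pow_gauss one_pos 0
    refine IntegrableOn.congr_fun h0 (fun x _ => ?_) measurableSet_Ioi
    simp only [pow_zero, neg_one_mul, one_mul]
  have key : ∫ t in Ioi (0:ℝ), (t ^ 2 - 1) * Real.exp (-t ^ 2 / 2) = 0 := by
    have hderiv : ∀ t ∈ Ici (0:ℝ), HasDerivAt
        (fun t : ℝ => -(t * Real.exp (-t ^ 2 / 2)))
        ((t ^ 2 - 1) * Real.exp (-t ^ 2 / 2)) t := by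
      intro t _
      have he : HasDerivAt (fun t : ℝ => Real.exp (-t ^ 2 / 2))
          (Real.exp (-t ^ 2 / 2) * (-t)) t := by
        have hinner : HasDerivAt (fun t : ℝ => -t ^ 2 / 2) (-t) t := by
          have := ((hasDerivAt_pow 2 t).neg).div_const 2
          refine this.congr_deriv ?_
          push_cast
          ring
        exact hinner.exp
      have := ((hasDerivAt_id t).mul he).neg
      refine this.congr_deriv ?_
      simp only [id_eq]
      ring
    have htend : Tendsto (fun t : ℝ => -(t * Real.exp (-t ^ 2 / 2))) atTop (nhds 0) := by
      have h1 : Tendsto (fun u : ℝ => u ^ (1/2 : ℝ) * Real.exp (-(1/2) * u)) atTop (nhds 0) :=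
        tendsto_rpow_mul_exp_neg_mul_atTop_nhds_zero _ _ (by norm_num)
      have h3 : Tendsto (fun t : ℝ => t ^ 2) atTop (atTop : Filter ℝ) :=
        tendsto_pow_atTop (by norm_num)
      have := (h1.comp h3).neg
      rw [neg_zero] at this
      refine this.congr' ?_
      filter_upwards [eventually_gt_atTop (0:ℝ)] with t ht
      simp only [Function.comp]
      rw [← Real.sqrt_eq_rpow, Real.sqrt_sq ht.le]
      ring_nf
    rw [integral_Ioi_of_hasDerivAt_of_tendsto' hderiv hsub htend]
    norm_num
  have hsplit : ∫ t in Ioi (0:ℝ), t ^ 2 * Real.exp (-t ^ 2 / 2)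
      = (∫ t in Ioi (0:ℝ), (t ^ 2 - 1) * Real.exp (-t ^ 2 / 2))
        + ∫ t in Ioi (0:ℝ), Real.exp (-t ^ 2 / 2) := by
    rw [← integral_add hsub h0']
    congr 1; funext t; ring
  rw [hsplit, key, zero_add]
  have : ∫ t in Ioi (0:ℝ), Real.exp (-t ^ 2 / 2)
      = ∫ t in Ioi (0:ℝ), Real.exp (-(1/2:ℝ) * t ^ 2) := by
    congr 1; funext t; ring_nf
  rw [this, integral_gaussian_Ioi]
  rw [show (π / (1/2) : ℝ) = 2 * π by ring]


noncomputable def phi2 (ρ x y : ℝ) : ℝ :=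
  (1 / (2 * Real.pi * Real.sqrt (1 - ρ ^ 2))) *
    Real.exp (-(x ^ 2 - 2 * ρ * x * y + y ^ 2) / (2 * (1 - ρ ^ 2)))

noncomputable def sg (x : ℝ) : ℝ := if 0 ≤ x then 1 else -1

noncomputable def Fc (c : ℝ) : ℝ :=
  ∫ t in Ioi (0:ℝ), t ^ 2 * Real.exp (-t ^ 2 / 2) * Phi (c * t)

lemma stdPdf_le (y : ℝ) : stdPdf y ≤ 1 / Real.sqrt (2 * π) := by
  rw [stdPdf_def]
  have h1 : Real.exp (-y ^ 2 / 2) ≤ 1 := by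
    rw [Real.exp_le_one_iff]
    nlinarith [sq_nonneg y]
  have h2 : (0:ℝ) < 1 / Real.sqrt (2 * π) := by positivity
  nlinarith

lemma sq_gauss_integrable : IntegrableOn (fun t : ℝ => t ^ 2 * Real.exp (-t ^ 2 / 2)) (Ioi 0) := by
  exact IntegrableOn.congr_fun (int_pow_gauss one_pos 2)
    (fun x _ => by norm_num) measurableSet_Ioi

lemma Fc_integrand_integrable (c : ℝ) :
    IntegrableOn (fun t : ℝ => t ^ 2 * Real.exp (-t ^ 2 / 2) * Phi (c * t)) (Ioi 0) := by
  apply Integrable.mono' sq_gauss_integrable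
  · exact (((continuous_pow 2).mul (by continuity)).mul
      (Phi_cont.comp (continuous_const.mul continuous_id))).aestronglyMeasurable
  · filter_upwards [ae_restrict_mem measurableSet_Ioi] with t ht
    rw [Real.norm_eq_abs, abs_mul]
    have h1 : 0 ≤ t ^ 2 * Real.exp (-t ^ 2 / 2) := by positivity
    rw [abs_of_nonneg h1, abs_of_nonneg (Phi_nonneg _)]
    nlinarith [Phi_le_one (c * t), Phi_nonneg (c * t)]

lemma Fc_hasDerivAt (c : ℝ) :
    HasDerivAt Fc ((1 / Real.sqrt (2 * π)) * (2 / (1 + c ^ 2) ^ 2)) c := by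
  set bound : ℝ → ℝ := fun t => t ^ 3 * Real.exp (-t ^ 2 / 2) * (1 / Real.sqrt (2 * π))
    with hbound_def
  have key := hasDerivAt_integral_of_dominated_loc_of_deriv_le (μ := volume.restrict (Ioi 0))
    (F := fun x t => t ^ 2 * Real.exp (-t ^ 2 / 2) * Phi (x * t))
    (F' := fun x t => t ^ 2 * Real.exp (-t ^ 2 / 2) * (t * stdPdf (x * t)))
    (x₀ := c) (bound := bound) (Metric.ball_mem_nhds c one_pos)
    (Filter.Eventually.of_forall fun x =>
      ((((continuous_pow 2).mul (by continuity)).mul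
        (Phi_cont.comp (continuous_const.mul continuous_id))).aestronglyMeasurable))
    (Fc_integrand_integrable c)
    ((((continuous_pow 2).mul (by continuity)).mul
      (continuous_id.mul (stdPdf_cont.comp (continuous_const.mul continuous_id)))).aestronglyMeasurable)
    ?_ ?_ ?_
  · have heq : (∫ t in Ioi (0:ℝ), t ^ 2 * Real.exp (-t ^ 2 / 2) * (t * stdPdf (c * t)))
        = (1 / Real.sqrt (2 * π)) * (2 / (1 + c ^ 2) ^ 2) := by
      have hrw : ∀ t : ℝ, t ^ 2 * Real.exp (-t ^ 2 / 2) * (t * stdPdf (c * t))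
          = (1 / Real.sqrt (2 * π)) * (t ^ 3 * Real.exp (-(1 + c ^ 2) * t ^ 2 / 2)) := by
        intro t
        rw [stdPdf_def]
        rw [show -(1 + c ^ 2) * t ^ 2 / 2 = -t ^ 2 / 2 + -(c * t) ^ 2 / 2 by ring,
          Real.exp_add]
        ring
      simp_rw [hrw]
      rw [integral_const_mul, int_cube_gauss (by positivity)]
    exact heq ▸ key.2
  · filter_upwards [ae_restrict_mem measurableSet_Ioi] with t ht x _
    rw [Real.norm_eq_abs]
    have h1 : 0 ≤ t ^ 2 * Real.exp (-t ^ 2 / 2) * (t * stdPdf (x * t)) := by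
      have := stdPdf_nonneg (x * t)
      have ht' : (0:ℝ) < t := ht
      positivity
    rw [abs_of_nonneg h1, hbound_def]
    have ht' : (0:ℝ) < t := ht
    have h2 := stdPdf_le (x * t)
    have h3 := stdPdf_nonneg (x * t)
    have h4 : (0:ℝ) ≤ t ^ 2 * Real.exp (-t ^ 2 / 2) * t := by positivity
    calc t ^ 2 * Real.exp (-t ^ 2 / 2) * (t * stdPdf (x * t))
        = (t ^ 2 * Real.exp (-t ^ 2 / 2) * t) * stdPdf (x * t) := by ring
      _ ≤ (t ^ 2 * Real.exp (-t ^ 2 / 2) * t) * (1 / Real.sqrt (2 * π)) :=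
          mul_le_mul_of_nonneg_left h2 h4
      _ = t ^ 3 * Real.exp (-t ^ 2 / 2) * (1 / Real.sqrt (2 * π)) := by ring
  · exact IntegrableOn.congr_fun ((int_pow_gauss one_pos 3).mul_const (1 / Real.sqrt (2 * π)))
      (fun x _ => by rw [hbound_def]; norm_num) measurableSet_Ioi
  · refine Filter.Eventually.of_forall fun t => fun x _ => ?_
    have hmul : HasDerivAt (fun x : ℝ => x * t) t x := hasDerivAt_mul_const t
    have hcomp : HasDerivAt (fun x : ℝ => Phi (x * t)) (stdPdf (x * t) * t) x :=
      by have := (Phi_hasDerivAt (x * t)).comp x hmul; exact this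
    have := hcomp.const_mul (t ^ 2 * Real.exp (-t ^ 2 / 2))
    refine this.congr_deriv ?_
    ring

lemma Fc_eq (c : ℝ) : Fc c = Real.sqrt (2 * π) / 4
    + (1 / Real.sqrt (2 * π)) * (Real.arctan c + c / (1 + c ^ 2)) := by
  have hFTC : ∫ u in (0:ℝ)..c, (1 / Real.sqrt (2 * π)) * (2 / (1 + u ^ 2) ^ 2)
      = Fc c - Fc 0 := by
    apply intervalIntegral.integral_eq_sub_of_hasDerivAt (fun u _ => Fc_hasDerivAt u)
    apply Continuous.intervalIntegrable
    have h : ∀ u : ℝ, (1 + u ^ 2) ^ 2 ≠ 0 := fun u => by positivity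
    exact continuous_const.mul (continuous_const.div (by continuity) h)
  have hanti : ∫ u in (0:ℝ)..c, (1 / Real.sqrt (2 * π)) * (2 / (1 + u ^ 2) ^ 2)
      = (1 / Real.sqrt (2 * π)) * (Real.arctan c + c / (1 + c ^ 2)) := by
    have hK : ∀ u : ℝ, HasDerivAt (fun u : ℝ =>
        (1 / Real.sqrt (2 * π)) * (Real.arctan u + u / (1 + u ^ 2)))
        ((1 / Real.sqrt (2 * π)) * (2 / (1 + u ^ 2) ^ 2)) u := by
      intro u
      have h0 : (1 + u ^ 2) ≠ 0 := by positivity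
      have hdiv : HasDerivAt (fun u : ℝ => u / (1 + u ^ 2))
          ((1 * (1 + u ^ 2) - u * (2 * u)) / (1 + u ^ 2) ^ 2) u := by
        have := (hasDerivAt_id u).div ((hasDerivAt_pow 2 u).const_add 1) h0
        refine this.congr_deriv ?_
        simp only [id_eq]
        push_cast
        ring
      have := ((Real.hasDerivAt_arctan u).add hdiv).const_mul (1 / Real.sqrt (2 * π))
      refine this.congr_deriv ?_
      field_simp
      ring
    rw [intervalIntegral.integral_eq_sub_of_hasDerivAt (fun u _ => hK u)]
    · simp [Real.arctan_zero]
    · apply Continuous.intervalIntegrable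
      have h : ∀ u : ℝ, (1 + u ^ 2) ^ 2 ≠ 0 := fun u => by positivity
      exact continuous_const.mul (continuous_const.div (by continuity) h)
  have hF0 : Fc 0 = Real.sqrt (2 * π) / 4 := by
    unfold Fc
    have : ∀ t : ℝ, t ^ 2 * Real.exp (-t ^ 2 / 2) * Phi (0 * t)
        = (t ^ 2 * Real.exp (-t ^ 2 / 2)) * (1/2) := by
      intro t; rw [zero_mul, Phi_zero]
    simp_rw [this]
    rw [integral_mul_const, int_sq_gauss]
    ring
  rw [hanti] at hFTC
  linarith [hFTC]

theorem stmt2 (ρ : ℝ) (h1 : 0 < ρ) (h2 : ρ < 1) :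
    ∫ t in Set.Ioi (0 : ℝ), t ^ 2 * Real.exp (-t ^ 2 / 2) * Phi (ρ * t / Real.sqrt (1 - ρ ^ 2))
      = Real.sqrt (Real.pi / 2) -
        (1 / Real.sqrt (2 * Real.pi)) *
          (Real.arctan (Real.sqrt (1 - ρ ^ 2) / ρ) - ρ * Real.sqrt (1 - ρ ^ 2)) := by
  set s := Real.sqrt (1 - ρ ^ 2) with hs_def
  have hρ2 : (0:ℝ) < 1 - ρ ^ 2 := by nlinarith
  have hs : 0 < s := Real.sqrt_pos.2 hρ2
  have hs2 : s ^ 2 = 1 - ρ ^ 2 := Real.sq_sqrt hρ2.le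
  have hL : (∫ t in Set.Ioi (0 : ℝ), t ^ 2 * Real.exp (-t ^ 2 / 2) * Phi (ρ * t / s))
      = Fc (ρ / s) := by
    unfold Fc
    congr 1
    funext t
    rw [show ρ * t / s = ρ / s * t by ring]
  rw [hL, Fc_eq]
  have hA : Real.arctan (ρ / s) = π / 2 - Real.arctan (s / ρ) := by
    rw [show ρ / s = (s / ρ)⁻¹ by rw [inv_div]]
    exact Real.arctan_inv_of_pos (div_pos hs h1)
  have hden : 1 + (ρ / s) ^ 2 = 1 / s ^ 2 := by
    field_simp
    linarith
  have hc2 : (ρ / s) / (1 + (ρ / s) ^ 2) = ρ * s := by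
    rw [hden]
    field_simp
  rw [hA, hc2]
  have hk : Real.sqrt (2 * π) ^ 2 = 2 * π := Real.sq_sqrt (by positivity)
  have hk0 : Real.sqrt (2 * π) ≠ 0 := by positivity
  have hhalf : Real.sqrt (π / 2) = Real.sqrt (2 * π) / 2 := by
    rw [show (2 * π : ℝ) = 2 ^ 2 * (π / 2) by ring, Real.sqrt_mul (by norm_num),
      Real.sqrt_sq (by norm_num)]
    ring
  rw [hhalf]
  set k := Real.sqrt (2 * π) with hk_def
  clear_value k
  have hkpos : 0 < k := by
    rw [hk_def]; positivity
  field_simp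
  linear_combination (-2) * hk
end

section
/- If (X,Y) is bivariate normal with standard normal marginals and correlation ρ ∈ (0,1), then E[(Y⁻·1_{X<0} + Y⁺·1_{X≥0})²] = 1 − (1/π)·(arctan(√(1-ρ²)/ρ) − ρ√(1-ρ²)). -/
open MeasureTheory Real Filter Set

lemma sg_mul_of_pos {r : ℝ} (hr : 0 < r) (t : ℝ) : sg (r * t) = sg t := by
  unfold sg
  rcases le_or_gt 0 t with h | h
  · rw [if_pos (mul_nonneg hr.le h), if_pos h]
  · rw [if_neg (not_le.2 (mul_neg_of_pos_of_neg hr h)), if_neg (not_le.2 h)]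

lemma measurable_sg : Measurable sg := by
  unfold sg
  exact Measurable.ite measurableSet_Ici measurable_const measurable_const

noncomputable def Hf (x y : ℝ) : ℝ := if 0 ≤ sg x * y then y ^ 2 else 0

lemma Hf_abs_le (x y : ℝ) : |Hf x y| ≤ y ^ 2 := by
  unfold Hf
  split
  · rw [abs_of_nonneg (sq_nonneg y)]
  · simp [sq_nonneg y]

lemma measurable_Hf2 {u : ℝ × ℝ → ℝ} (hu : Measurable u) :
    Measurable (fun p : ℝ × ℝ => Hf (u p) p.2) := by
  unfold Hf
  exact Measurable.ite
    (measurableSet_le measurable_const ((measurable_sg.comp hu).mul measurable_snd))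
    (measurable_snd.pow_const 2) measurable_const

lemma integrable_sq_exp {b : ℝ} (hb : 0 < b) :
    Integrable (fun y : ℝ => y ^ 2 * Real.exp (-b * y ^ 2)) := by
  have key : ∀ y : ℝ, y ^ 2 * Real.exp (-b * y ^ 2) ≤ (2 / b) * Real.exp (-(b / 2) * y ^ 2) := by
    intro y
    have h1 : b / 2 * y ^ 2 + 1 ≤ Real.exp (b / 2 * y ^ 2) := Real.add_one_le_exp _
    have h2 : y ^ 2 ≤ (2 / b) * Real.exp (b / 2 * y ^ 2) := by
      have h3 := Real.exp_pos (b / 2 * y ^ 2)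
      have hb' : (2 / b) * (b / 2) = 1 := by field_simp
      nlinarith [mul_le_mul_of_nonneg_left h1 (le_of_lt (div_pos two_pos hb))]
    calc y ^ 2 * Real.exp (-b * y ^ 2)
        ≤ ((2 / b) * Real.exp (b / 2 * y ^ 2)) * Real.exp (-b * y ^ 2) :=
          mul_le_mul_of_nonneg_right h2 (Real.exp_pos _).le
      _ = (2 / b) * Real.exp (-(b / 2) * y ^ 2) := by
          rw [mul_assoc, ← Real.exp_add]; ring_nf
  refine Integrable.mono' ((integrable_exp_neg_mul_sq (by linarith : (0:ℝ) < b / 2)).const_mul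
    (2 / b)) ?_ (Filter.Eventually.of_forall fun y => ?_)
  · exact ((measurable_id.pow_const 2).mul
      ((measurable_id.pow_const 2).const_mul (-b)).exp).aestronglyMeasurable
  · rw [Real.norm_eq_abs, abs_of_nonneg (by positivity)]
    exact key y

lemma cov_mul_add (g : ℝ → ℝ) {c : ℝ} (hc : 0 < c) (d : ℝ) :
    ∫ x, g x = c * ∫ u, g (c * u + d) := by
  have h1 : (∫ u, g (c * u + d)) = |c⁻¹| • ∫ t, g (t + d) :=
    Measure.integral_comp_mul_left (fun t => g (t + d)) c
  rw [h1, integral_add_right_eq_self g d, abs_of_nonneg (inv_nonneg.2 hc.le), smul_eq_mul]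
  field_simp

lemma radial_integral : ∫ r in Ioi (0:ℝ), r ^ 3 * Real.exp (-r ^ 2 / 2) = 2 := by
  have hderiv : ∀ x ∈ Ici (0:ℝ),
      HasDerivAt (fun r : ℝ => -(r ^ 2 + 2) * Real.exp (-r ^ 2 / 2))
        (x ^ 3 * Real.exp (-x ^ 2 / 2)) x := by
    intro x _
    have h1 : HasDerivAt (fun r : ℝ => -r ^ 2 / 2) (-x) x := by
      have := ((hasDerivAt_pow 2 x).neg.div_const 2)
      refine this.congr_deriv ?_
      simp; ring
    have h2 : HasDerivAt (fun r : ℝ => Real.exp (-r ^ 2 / 2))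
        (Real.exp (-x ^ 2 / 2) * (-x)) x := h1.exp
    have h3 : HasDerivAt (fun r : ℝ => -(r ^ 2 + 2)) (-(2 * x)) x := by
      have := ((hasDerivAt_pow 2 x).add_const 2).neg
      refine this.congr_deriv ?_
      simp
    have := h3.mul h2
    refine this.congr_deriv ?_
    ring
  have hint : IntegrableOn (fun x : ℝ => x ^ 3 * Real.exp (-x ^ 2 / 2)) (Ioi 0) := by
    have h := integrableOn_rpow_mul_exp_neg_mul_sq (by norm_num : (0:ℝ) < 1/2)
      (by norm_num : (-1:ℝ) < 3)
    refine h.congr_fun (fun x _ => ?_) measurableSet_Ioi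
    beta_reduce
    rw [show ((3:ℝ) = ((3:ℕ):ℝ)) by norm_num, Real.rpow_natCast]
    congr 1
    ring
  have htend : Tendsto (fun r : ℝ => -(r ^ 2 + 2) * Real.exp (-r ^ 2 / 2)) atTop (nhds 0) := by
    have hcomp : Tendsto (fun t : ℝ => -((2 * t + 2) * Real.exp (-t))) atTop (nhds 0) := by
      have ha : Tendsto (fun t : ℝ => t * Real.exp (-t)) atTop (nhds 0) := by
        simpa using Real.tendsto_pow_mul_exp_neg_atTop_nhds_zero 1
      have hb : Tendsto (fun t : ℝ => Real.exp (-t)) atTop (nhds 0) := by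
        simpa using Real.tendsto_exp_neg_atTop_nhds_zero
      have := ((ha.const_mul 2).add (hb.const_mul 2)).neg
      simpa [mul_add, add_mul, mul_comm, mul_assoc, mul_left_comm] using this
    have hsq : Tendsto (fun r : ℝ => r ^ 2 / 2) atTop atTop :=
      (tendsto_pow_atTop (two_ne_zero)).atTop_div_const (by norm_num)
    have := hcomp.comp hsq
    convert this using 2 with r
    simp only [Function.comp]
    ring_nf
  have := integral_Ioi_of_hasDerivAt_of_tendsto' hderiv hint htend
  rw [this]
  norm_num

lemma angular (ρ : ℝ) (h1 : 0 < ρ) (h2 : ρ < 1) :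
    (∫ θ in Ioo (-π) π,
      (if 0 ≤ sg (Real.sqrt (1 - ρ ^ 2) * Real.cos θ + ρ * Real.sin θ) * Real.sin θ
        then Real.sin θ ^ 2 else 0))
      = Real.arcsin ρ + π / 2 + Real.sqrt (1 - ρ ^ 2) * ρ := by
  have hπ : (0:ℝ) < π := Real.pi_pos
  set s : ℝ := Real.sqrt (1 - ρ ^ 2) with hs_def
  set α : ℝ := Real.arcsin ρ with hα_def
  have h1ρ : 0 < 1 - ρ ^ 2 := by nlinarith
  have hs : 0 < s := Real.sqrt_pos.2 h1ρ
  have hsinα : Real.sin α = ρ := Real.sin_arcsin (by linarith) (by linarith)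
  have hcosα : Real.cos α = s := Real.cos_arcsin ρ
  have hα0 : 0 < α := Real.arcsin_pos.2 h1
  have hα2 : α < π / 2 := Real.arcsin_lt_pi_div_two.2 h2
  have hc : ∀ θ : ℝ, s * Real.cos θ + ρ * Real.sin θ = Real.cos (θ - α) := by
    intro θ; rw [Real.cos_sub, hsinα, hcosα]; ring
  set f : ℝ → ℝ := fun t => Real.sin t ^ 2 with hf_def
  have hS1 : MeasurableSet (Ioo (-π) (α - π / 2)) := measurableSet_Ioo
  have hS2 : MeasurableSet (Icc (0:ℝ) (α + π / 2)) := measurableSet_Icc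
  have hpt : ∀ θ ∈ Ioo (-π) π,
      (if 0 ≤ sg (s * Real.cos θ + ρ * Real.sin θ) * Real.sin θ then Real.sin θ ^ 2 else 0)
        = (Ioo (-π) (α - π / 2)).indicator f θ + (Icc (0:ℝ) (α + π / 2)).indicator f θ := by
    intro θ hθ
    obtain ⟨hθ1, hθ2⟩ := hθ
    rw [hc θ]
    rcases le_or_gt 0 θ with h0 | h0
    · rcases le_or_gt θ (α + π / 2) with hb | hb
      · have hcn : 0 ≤ Real.cos (θ - α) :=
          Real.cos_nonneg_of_mem_Icc ⟨by linarith, by linarith⟩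
        have hsg : sg (Real.cos (θ - α)) = 1 := if_pos hcn
        have hsn : 0 ≤ Real.sin θ := Real.sin_nonneg_of_nonneg_of_le_pi h0 (by linarith)
        rw [hsg, if_pos (by linarith [hsn] : 0 ≤ (1:ℝ) * Real.sin θ)]
        rw [Set.indicator_of_notMem (by simp only [mem_Ioo, not_and_or, not_lt]; right; linarith),
          Set.indicator_of_mem (show θ ∈ Icc (0:ℝ) (α + π / 2) from ⟨h0, hb⟩) f]
        simp [hf_def]
      · have hcneg : Real.cos (θ - α) < 0 :=
          Real.cos_neg_of_pi_div_two_lt_of_lt (by linarith) (by linarith)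
        have hsg : sg (Real.cos (θ - α)) = -1 := if_neg (not_le.2 hcneg)
        have hsn : 0 < Real.sin θ := Real.sin_pos_of_pos_of_lt_pi (by linarith) hθ2
        rw [hsg, if_neg (by simp only [neg_one_mul, not_le, neg_neg]; linarith)]
        rw [Set.indicator_of_notMem (by simp only [mem_Ioo, not_and_or, not_lt]; right; linarith),
          Set.indicator_of_notMem (by simp only [mem_Icc, not_and_or, not_le]; right; linarith)]
        norm_num
    · have hsneg : Real.sin θ < 0 := Real.sin_neg_of_neg_of_neg_pi_lt h0 hθ1
      rcases lt_or_ge θ (α - π / 2) with hb | hb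
      · have hcneg : Real.cos (θ - α) < 0 := by
          rw [← Real.cos_neg]
          exact Real.cos_neg_of_pi_div_two_lt_of_lt (by linarith [neg_sub θ α]; ) (by linarith)
        have hsg : sg (Real.cos (θ - α)) = -1 := if_neg (not_le.2 hcneg)
        rw [hsg, if_pos (by simp only [neg_one_mul]; linarith)]
        rw [Set.indicator_of_mem (show θ ∈ Ioo (-π) (α - π / 2) from ⟨hθ1, hb⟩) f,
          Set.indicator_of_notMem (by simp only [mem_Icc, not_and_or, not_le]; left; linarith)]
        simp [hf_def]
      · have hcn : 0 ≤ Real.cos (θ - α) :=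
          Real.cos_nonneg_of_mem_Icc ⟨by linarith, by linarith⟩
        have hsg : sg (Real.cos (θ - α)) = 1 := if_pos hcn
        rw [hsg, if_neg (by simp only [one_mul, not_le]; linarith)]
        rw [Set.indicator_of_notMem (by simp only [mem_Ioo, not_and_or, not_lt]; right; linarith),
          Set.indicator_of_notMem (by simp only [mem_Icc, not_and_or, not_le]; left; linarith)]
        norm_num
  rw [setIntegral_congr_fun measurableSet_Ioo hpt]
  have hfc : Continuous f := continuous_sin.pow 2
  have hint1 : IntegrableOn f (Ioo (-π) (α - π / 2)) :=
    (hfc.integrableOn_Icc).mono_set Ioo_subset_Icc_self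
  have hint2 : IntegrableOn f (Icc (0:ℝ) (α + π / 2)) := hfc.integrableOn_Icc
  have hi1 : Integrable ((Ioo (-π) (α - π / 2)).indicator f)
      (volume.restrict (Ioo (-π) π)) :=
    ((integrable_indicator_iff hS1).2 hint1).restrict
  have hi2 : Integrable ((Icc (0:ℝ) (α + π / 2)).indicator f)
      (volume.restrict (Ioo (-π) π)) :=
    ((integrable_indicator_iff hS2).2 hint2).restrict
  rw [integral_add hi1 hi2, integral_indicator hS1, integral_indicator hS2,
    Measure.restrict_restrict hS1, Measure.restrict_restrict hS2,
    inter_eq_self_of_subset_left (by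
      intro x hx; exact ⟨hx.1, by obtain ⟨_, h⟩ := hx; linarith [h] ⟩ :
        Ioo (-π) (α - π / 2) ⊆ Ioo (-π) π),
    inter_eq_self_of_subset_left (by
      intro x hx; obtain ⟨ha, hb⟩ := hx; exact ⟨by linarith, by linarith⟩ :
        Icc (0:ℝ) (α + π / 2) ⊆ Ioo (-π) π)]
  rw [← integral_Ioc_eq_integral_Ioo, integral_Icc_eq_integral_Ioc,
    ← intervalIntegral.integral_of_le (by linarith : -π ≤ α - π / 2),
    ← intervalIntegral.integral_of_le (by linarith : (0:ℝ) ≤ α + π / 2)]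
  simp only [hf_def]
  rw [integral_sin_sq, integral_sin_sq]
  rw [Real.sin_sub_pi_div_two, Real.cos_sub_pi_div_two, Real.sin_add_pi_div_two,
    Real.cos_add_pi_div_two, hsinα, hcosα]
  simp [Real.sin_neg, Real.sin_pi]
  ring

theorem stmt11 (ρ : ℝ) (h1 : 0 < ρ) (h2 : ρ < 1) :
    ∫ p : ℝ × ℝ,
        (max (-p.2) 0 * (if p.1 < 0 then (1 : ℝ) else 0) +
          max p.2 0 * (if 0 ≤ p.1 then (1 : ℝ) else 0)) ^ 2 * phi2 ρ p.1 p.2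
      = 1 - (1 / Real.pi) *
          (Real.arctan (Real.sqrt (1 - ρ ^ 2) / ρ) - ρ * Real.sqrt (1 - ρ ^ 2)) := by
  have hπ : (0:ℝ) < π := Real.pi_pos
  set s : ℝ := Real.sqrt (1 - ρ ^ 2) with hs_def
  have h1ρ : 0 < 1 - ρ ^ 2 := by nlinarith
  have hs2 : s ^ 2 = 1 - ρ ^ 2 := Real.sq_sqrt h1ρ.le
  have hs : 0 < s := Real.sqrt_pos.2 h1ρ
  set G : ℝ × ℝ → ℝ := fun p => Hf p.1 p.2 * phi2 ρ p.1 p.2 with hG_def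
  set F : ℝ × ℝ → ℝ := fun p => Hf (s * p.1 + ρ * p.2) p.2 *
      ((1 / (2 * π)) * Real.exp (-(p.1 ^ 2 + p.2 ^ 2) / 2)) with hF_def
  set W : ℝ → ℝ := fun θ =>
      if 0 ≤ sg (s * Real.cos θ + ρ * Real.sin θ) * Real.sin θ then Real.sin θ ^ 2 else 0
    with hW_def
  -- step 0 : rewrite the integrand
  have hEq0 : (fun p : ℝ × ℝ =>
      (max (-p.2) 0 * (if p.1 < 0 then (1 : ℝ) else 0) +
          max p.2 0 * (if 0 ≤ p.1 then (1 : ℝ) else 0)) ^ 2 * phi2 ρ p.1 p.2) = G := by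
    funext p
    simp only [hG_def]
    congr 1
    unfold Hf sg
    rcases le_or_gt 0 p.1 with hx | hx
    · rw [if_neg (not_lt.2 hx), if_pos hx, if_pos hx, one_mul]
      rcases le_or_gt 0 p.2 with hy | hy
      · rw [if_pos hy, max_eq_left hy, max_eq_right (neg_nonpos.2 hy)]
        ring
      · rw [if_neg (not_le.2 hy), max_eq_right hy.le]
        ring
    · rw [if_pos hx, if_neg (not_le.2 hx), if_neg (not_le.2 hx), neg_one_mul]
      rcases le_or_gt 0 (-p.2) with hy | hy
      · rw [if_pos hy, max_eq_left hy, max_eq_right (by linarith : p.2 ≤ 0)]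
        ring
      · rw [if_neg (not_le.2 hy), max_eq_right (by linarith : -p.2 ≤ 0)]
        ring
  -- measurability
  have hphi2meas : Measurable (fun p : ℝ × ℝ => phi2 ρ p.1 p.2) := by
    unfold phi2; fun_prop
  have hGmeas : Measurable G := (measurable_Hf2 measurable_fst).mul hphi2meas
  have hFmeas : Measurable F := by
    refine (measurable_Hf2 ((measurable_fst.const_mul s).add (measurable_snd.const_mul ρ))).mul ?_
    fun_prop
  have hphi2nonneg : ∀ x y : ℝ, 0 ≤ phi2 ρ x y := by
    intro x y; unfold phi2; rw [← hs_def]; positivity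
  -- bound on phi2
  have hphi2le : ∀ x y : ℝ,
      phi2 ρ x y ≤ (1 / (2 * π * s)) * Real.exp (-(x ^ 2 + y ^ 2) / 4) := by
    intro x y
    unfold phi2
    rw [← hs_def]
    refine mul_le_mul_of_nonneg_left (Real.exp_le_exp.2 ?_) (by positivity)
    rw [div_le_div_iff₀ (by positivity) (by norm_num : (0:ℝ) < 4)]
    nlinarith [mul_nonneg h1.le (sq_nonneg (x - y)),
      mul_nonneg (mul_nonneg (sub_nonneg.2 h2.le) (sub_nonneg.2 h2.le))
        (add_nonneg (sq_nonneg x) (sq_nonneg y))]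
  -- integrability of G
  have hGint : Integrable G := by
    have hbm : Integrable (fun p : ℝ × ℝ => (1 / (2 * π * s)) *
        (Real.exp (-(1/4) * p.1 ^ 2) * (p.2 ^ 2 * Real.exp (-(1/4) * p.2 ^ 2)))) := by
      have := ((integrable_exp_neg_mul_sq (by norm_num : (0:ℝ) < 1/4)).mul_prod
        (integrable_sq_exp (by norm_num : (0:ℝ) < 1/4))).const_mul (1 / (2 * π * s))
      rwa [← Measure.volume_eq_prod ℝ ℝ] at this
    refine hbm.mono' hGmeas.aestronglyMeasurable (Filter.Eventually.of_forall fun p => ?_)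
    rw [Real.norm_eq_abs]
    calc |G p| = |Hf p.1 p.2| * phi2 ρ p.1 p.2 := by
          rw [hG_def, abs_mul, abs_of_nonneg (hphi2nonneg p.1 p.2)]
      _ ≤ p.2 ^ 2 * phi2 ρ p.1 p.2 :=
          mul_le_mul_of_nonneg_right (Hf_abs_le _ _) (hphi2nonneg p.1 p.2)
      _ ≤ p.2 ^ 2 * ((1 / (2 * π * s)) * Real.exp (-(p.1 ^ 2 + p.2 ^ 2) / 4)) :=
          mul_le_mul_of_nonneg_left (hphi2le p.1 p.2) (sq_nonneg _)
      _ = (1 / (2 * π * s)) *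
          (Real.exp (-(1/4) * p.1 ^ 2) * (p.2 ^ 2 * Real.exp (-(1/4) * p.2 ^ 2))) := by
          rw [show Real.exp (-(p.1 ^ 2 + p.2 ^ 2) / 4)
              = Real.exp (-(1/4) * p.1 ^ 2) * Real.exp (-(1/4) * p.2 ^ 2) from by
            rw [← Real.exp_add]; ring_nf]
          ring
  -- integrability of F
  have hFint : Integrable F := by
    have hbm : Integrable (fun p : ℝ × ℝ => (1 / (2 * π)) *
        (Real.exp (-(1/2) * p.1 ^ 2) * (p.2 ^ 2 * Real.exp (-(1/2) * p.2 ^ 2)))) := by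
      have := ((integrable_exp_neg_mul_sq (by norm_num : (0:ℝ) < 1/2)).mul_prod
        (integrable_sq_exp (by norm_num : (0:ℝ) < 1/2))).const_mul (1 / (2 * π))
      rwa [← Measure.volume_eq_prod ℝ ℝ] at this
    refine hbm.mono' hFmeas.aestronglyMeasurable (Filter.Eventually.of_forall fun p => ?_)
    rw [Real.norm_eq_abs]
    calc |F p| = |Hf (s * p.1 + ρ * p.2) p.2| *
          ((1 / (2 * π)) * Real.exp (-(p.1 ^ 2 + p.2 ^ 2) / 2)) := by
          rw [hF_def, abs_mul,
            abs_of_nonneg (show (0:ℝ) ≤ (1 / (2 * π)) * Real.exp (-(p.1 ^ 2 + p.2 ^ 2) / 2)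
              by positivity)]
      _ ≤ p.2 ^ 2 * ((1 / (2 * π)) * Real.exp (-(p.1 ^ 2 + p.2 ^ 2) / 2)) :=
          mul_le_mul_of_nonneg_right (Hf_abs_le _ _) (by positivity)
      _ = (1 / (2 * π)) *
          (Real.exp (-(1/2) * p.1 ^ 2) * (p.2 ^ 2 * Real.exp (-(1/2) * p.2 ^ 2))) := by
          rw [show Real.exp (-(p.1 ^ 2 + p.2 ^ 2) / 2)
              = Real.exp (-(1/2) * p.1 ^ 2) * Real.exp (-(1/2) * p.2 ^ 2) from by
            rw [← Real.exp_add]; ring_nf]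
          ring
  -- key density identity
  have hkey : ∀ u y : ℝ, phi2 ρ (s * u + ρ * y) y * s
      = (1 / (2 * π)) * Real.exp (-(u ^ 2 + y ^ 2) / 2) := by
    intro u y
    unfold phi2
    rw [← hs_def]
    have hQ : (s * u + ρ * y) ^ 2 - 2 * ρ * (s * u + ρ * y) * y + y ^ 2
        = (1 - ρ ^ 2) * (u ^ 2 + y ^ 2) := by linear_combination u ^ 2 * hs2
    rw [hQ, show -((1 - ρ ^ 2) * (u ^ 2 + y ^ 2)) / (2 * (1 - ρ ^ 2)) = -(u ^ 2 + y ^ 2) / 2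
      from by field_simp]
    field_simp
  -- inner change of variables
  have hinner : ∀ y : ℝ, (∫ x, G (x, y)) = ∫ u, F (u, y) := by
    intro y
    simp only [hG_def, hF_def]
    rw [cov_mul_add (fun x => Hf x y * phi2 ρ x y) hs (ρ * y), ← integral_const_mul]
    congr 1
    funext u
    rw [← hkey u y]
    ring
  -- polar pointwise identity
  have hpolar : ∀ p ∈ Ioi (0:ℝ) ×ˢ Ioo (-π) π,
      p.1 • F (polarCoord.symm p)
        = (p.1 ^ 3 * Real.exp (-p.1 ^ 2 / 2)) * ((1 / (2 * π)) * W p.2) := by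
    intro p hp
    have hr : 0 < p.1 := hp.1
    rw [polarCoord_symm_apply]
    simp only [hF_def, hW_def]
    have harg : s * (p.1 * Real.cos p.2) + ρ * (p.1 * Real.sin p.2)
        = p.1 * (s * Real.cos p.2 + ρ * Real.sin p.2) := by ring
    have hexp : (p.1 * Real.cos p.2) ^ 2 + (p.1 * Real.sin p.2) ^ 2 = p.1 ^ 2 := by
      have h := Real.cos_sq_add_sin_sq p.2
      nlinarith [h]
    rw [harg, hexp]
    unfold Hf
    rw [sg_mul_of_pos hr]
    have hiff : (0 ≤ sg (s * Real.cos p.2 + ρ * Real.sin p.2) * (p.1 * Real.sin p.2))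
        ↔ (0 ≤ sg (s * Real.cos p.2 + ρ * Real.sin p.2) * Real.sin p.2) := by
      rw [show sg (s * Real.cos p.2 + ρ * Real.sin p.2) * (p.1 * Real.sin p.2)
          = p.1 * (sg (s * Real.cos p.2 + ρ * Real.sin p.2) * Real.sin p.2) from by ring]
      exact mul_nonneg_iff_of_pos_left hr
    by_cases hcond : 0 ≤ sg (s * Real.cos p.2 + ρ * Real.sin p.2) * Real.sin p.2
    · rw [if_pos (hiff.2 hcond), if_pos hcond, smul_eq_mul]
      ring
    · rw [if_neg (fun h => hcond (hiff.1 h)), if_neg hcond, smul_eq_mul]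
      ring
  -- main computation
  have hProd : (volume : Measure (ℝ × ℝ)) = (volume : Measure ℝ).prod volume := Measure.volume_eq_prod ℝ ℝ
  have hGint' : Integrable G ((volume : Measure ℝ).prod volume) := hProd ▸ hGint
  have hFint' : Integrable F ((volume : Measure ℝ).prod volume) := hProd ▸ hFint
  rw [hEq0]
  calc ∫ p, G p = ∫ p, G p ∂((volume : Measure ℝ).prod volume) := by rw [← hProd]
    _ = ∫ x, ∫ y, G (x, y) := integral_prod G hGint'
    _ = ∫ y, ∫ x, G (x, y) := integral_integral_swap (by exact hGint')
    _ = ∫ y, ∫ u, F (u, y) := integral_congr_ae (Filter.Eventually.of_forall hinner)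
    _ = ∫ z, F (z.2, z.1) ∂((volume : Measure ℝ).prod volume) :=
        integral_integral (by exact hFint'.swap)
    _ = ∫ z, F z ∂((volume : Measure ℝ).prod volume) := integral_prod_swap F
    _ = ∫ z, F z := by rw [← hProd]
    _ = ∫ p in polarCoord.target, p.1 • F (polarCoord.symm p) :=
        (integral_comp_polarCoord_symm F).symm
    _ = ∫ p in Ioi (0:ℝ) ×ˢ Ioo (-π) π,
          (p.1 ^ 3 * Real.exp (-p.1 ^ 2 / 2)) * ((1 / (2 * π)) * W p.2) := by
        rw [polarCoord_target]
        exact setIntegral_congr_fun (measurableSet_Ioi.prod measurableSet_Ioo) hpolar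
    _ = (∫ r in Ioi (0:ℝ), r ^ 3 * Real.exp (-r ^ 2 / 2)) *
          (∫ θ in Ioo (-π) π, (1 / (2 * π)) * W θ) := by
        rw [show (volume : Measure (ℝ × ℝ)).restrict (Ioi (0:ℝ) ×ˢ Ioo (-π) π)
            = ((volume : Measure ℝ).restrict (Ioi (0:ℝ))).prod
                ((volume : Measure ℝ).restrict (Ioo (-π) π)) from by
          rw [hProd, Measure.prod_restrict]]
        exact integral_prod_mul (f := fun r : ℝ => r ^ 3 * Real.exp (-r ^ 2 / 2))
          (g := fun θ : ℝ => (1 / (2 * π)) * W θ)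
    _ = 2 * ((1 / (2 * π)) * (Real.arcsin ρ + π / 2 + s * ρ)) := by
        rw [radial_integral, integral_const_mul]
        congr 2
        rw [hW_def, hs_def]
        exact angular ρ h1 h2
    _ = 1 - (1 / π) * (Real.arctan (s / ρ) - ρ * s) := by
        have harct : Real.arctan (s / ρ) = π / 2 - Real.arcsin ρ := by
          rw [hs_def, ← Real.arccos_eq_arctan h1, Real.arccos_eq_pi_div_two_sub_arcsin]
        rw [harct]
        field_simp
        ring
end
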